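/- arXiv:2509.04364 — 4 statements merged into one kernel-verified Lean document; each statement's English description precedes it below -/
import Mathlib

section
/- Let I be an ideal of S such that in_{x_n}(I) = C(x_n,I) ∩ (N(x_n,I) + (x_n)) is a nondegenerate geometric vertex decomposition and suppose N(x_n,I) has no embedded primes. Let q ∈ C(x_n,I) and r ∈ S have no term divisible by x_n with x_n·q + r ∈ I, and let u ∈ C(x_n,I) and s ∈ S have no term divisible by x_n with x_n·u + s ∈ I. Then u·r − s·q ∈ N(x_n,I); equivalently, (x_n·u + s)·q − u·(x_n·q + r) ∈ N(x_n,I). -/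
open MvPolynomial

/-- The trace map on a polynomial ring: on a monomial `m`, it returns
`(m·x_1⋯x_n)^{1/p}/(x_1⋯x_n)` if `m·x_1⋯x_n` is a `p`-th power of a monomial,
and `0` otherwise, extended `κ`-linearly. -/
noncomputable def Tr (κ : Type*) [CommSemiring κ] {σ : Type*} [Fintype σ] [DecidableEq σ]
    (p : ℕ) (f : MvPolynomial σ κ) : MvPolynomial σ κ :=
  ∑ b ∈ f.support,
    if ∀ i : σ, (b i + 1) % p = 0 then
      MvPolynomial.monomial (Finsupp.equivFunOnFinite.symm fun i => (b i + 1) / p - 1) (f.coeff b)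
    else 0

/-- A Frobenius splitting: an additive map `φ` with `φ(a^p·b) = a·φ(b)` and `φ(1) = 1`. -/
def IsFrobSplitting {R : Type*} [CommSemiring R] (p : ℕ) (φ : R → R) : Prop :=
  (∀ a b : R, φ (a + b) = φ a + φ b) ∧ (∀ a b : R, φ (a ^ p * b) = a * φ b) ∧ φ 1 = 1

/-- `φ` compatibly splits the ideal `I` if `φ(I) ⊆ I`. -/
def CompatiblySplits {R : Type*} [CommSemiring R] (φ : R → R) (I : Ideal R) : Prop :=
  ∀ a ∈ I, φ a ∈ I

/-- `f` has no term divisible by the variable `y`. -/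
def NoVar {κ : Type*} [CommSemiring κ] {σ : Type*} (y : σ) (f : MvPolynomial σ κ) : Prop :=
  ∀ b ∈ f.support, (b : σ →₀ ℕ) y = 0

/-- `in_y(f)`: the sum of the terms of `f` of highest degree in the variable `y`. -/
noncomputable def inY {κ : Type*} [CommSemiring κ] {σ : Type*} [DecidableEq σ]
    (y : σ) (f : MvPolynomial σ κ) : MvPolynomial σ κ :=
  ∑ b ∈ f.support,
    if (b : σ →₀ ℕ) y = f.degreeOf y then MvPolynomial.monomial b (f.coeff b) else 0

/-- `in_y(I)`, the ideal generated by `in_y(f)` for `f ∈ I`. -/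
noncomputable def inYIdeal {κ : Type*} [CommSemiring κ] {σ : Type*} [DecidableEq σ]
    (y : σ) (I : Ideal (MvPolynomial σ κ)) : Ideal (MvPolynomial σ κ) :=
  Ideal.span { g | ∃ f ∈ I, g = inY y f }

/-- The saturation `J : x^∞`. -/
def satPow {R : Type*} [CommRing R] (J : Ideal R) (x : R) : Ideal R where
  carrier := { f | ∃ k : ℕ, x ^ k * f ∈ J }
  zero_mem' := ⟨0, by simp⟩
  add_mem' := by
    rintro a b ⟨k, hk⟩ ⟨l, hl⟩
    refine ⟨k + l, ?_⟩
    have h := J.add_mem (J.mul_mem_left (x ^ l) hk) (J.mul_mem_left (x ^ k) hl)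
    have e : x ^ (k + l) * (a + b) = x ^ l * (x ^ k * a) + x ^ k * (x ^ l * b) := by ring
    rwa [e]
  smul_mem' := by
    rintro c a ⟨k, hk⟩
    refine ⟨k, ?_⟩
    have h := J.mul_mem_left c hk
    have e : x ^ k * (c • a) = c * (x ^ k * a) := by
      simp [smul_eq_mul]; ring
    rwa [e]

/-- `C(y,I) = in_y(I) : y^∞`. -/
noncomputable def Cyd {κ : Type*} [Field κ] {σ : Type*} [DecidableEq σ]
    (y : σ) (I : Ideal (MvPolynomial σ κ)) : Ideal (MvPolynomial σ κ) :=
  satPow (inYIdeal y I) (X y)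

/-- `N(y,I)`, the ideal generated by the elements of `I` having no term divisible by `y`. -/
noncomputable def Nyd {κ : Type*} [Field κ] {σ : Type*} (y : σ) (I : Ideal (MvPolynomial σ κ)) :
    Ideal (MvPolynomial σ κ) :=
  Ideal.span { f | f ∈ I ∧ NoVar y f }

/-- `I` admits a geometric vertex decomposition at `y`. -/
def IsGVD {κ : Type*} [Field κ] {σ : Type*} [DecidableEq σ]
    (y : σ) (I : Ideal (MvPolynomial σ κ)) : Prop :=
  inYIdeal y I = Cyd y I ⊓ (Nyd y I + Ideal.span {X y}) ∧
    ((Cyd y I).radical = (Nyd y I).radical ∨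
      ∀ P ∈ (Cyd y I).minimalPrimes, P ∉ (Nyd y I).minimalPrimes)

/-- A nondegenerate geometric vertex decomposition. -/
def IsNondegGVD {κ : Type*} [Field κ] {σ : Type*} [DecidableEq σ]
    (y : σ) (I : Ideal (MvPolynomial σ κ)) : Prop :=
  IsGVD y I ∧ Cyd y I ≠ ⊤ ∧ (Cyd y I).radical ≠ (Nyd y I).radical

/-- A degenerate geometric vertex decomposition. -/
def IsDegenGVD {κ : Type*} [Field κ] {σ : Type*} [DecidableEq σ]
    (y : σ) (I : Ideal (MvPolynomial σ κ)) : Prop :=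
  IsGVD y I ∧ (Cyd y I = ⊤ ∨ (Cyd y I).radical = (Nyd y I).radical)

/-- The ideal `N` has no embedded primes: every associated prime is minimal. -/
def NoEmbeddedPrimes {R : Type*} [CommRing R] (N : Ideal R) : Prop :=
  associatedPrimes R (R ⧸ N) ⊆ N.minimalPrimes

/-- `q` is a nonzerodivisor modulo `N`. -/
def NZDMod {R : Type*} [CommRing R] (N : Ideal R) (q : R) : Prop :=
  ∀ a : R, q * a ∈ N → a ∈ N


lemma NoVar.mul {κ : Type*} [CommSemiring κ] {σ : Type*} [DecidableEq σ] {y : σ} {f g : MvPolynomial σ κ}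
    (hf : NoVar y f) (hg : NoVar y g) : NoVar y (f * g) := by
  intro b hb
  obtain ⟨b1, hb1, b2, hb2, rfl⟩ := Finset.mem_add.mp (MvPolynomial.support_mul f g hb)
  simp [hf b1 hb1, hg b2 hb2]

lemma NoVar.sub {κ : Type*} [CommRing κ] {σ : Type*} [DecidableEq σ] {y : σ} {f g : MvPolynomial σ κ}
    (hf : NoVar y f) (hg : NoVar y g) : NoVar y (f - g) := by
  intro b hb
  rcases Finset.mem_union.mp (MvPolynomial.support_sub σ f g hb) with h | h
  · exact hf b h
  · exact hg b h

/-- If `x_n·q + r ∈ I` and `x_n·u + s ∈ I` with `q, u ∈ C(x_n,I)` and no term of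
`q, r, u, s` divisible by `x_n`, then `u·r − s·q ∈ N(x_n,I)`; equivalently,
`(x_n·u + s)·q − u·(x_n·q + r) ∈ N(x_n,I)`. -/
theorem gvd_cross_relation {p : ℕ} [Fact p.Prime] {κ : Type*} [Field κ] [CharP κ p]
    [PerfectRing κ p]
    {n : ℕ} (I : Ideal (MvPolynomial (Fin (n + 1)) κ))
    (hgvd : IsNondegGVD (Fin.last n) I)
    (hemb : NoEmbeddedPrimes (Nyd (Fin.last n) I))
    (q r u s : MvPolynomial (Fin (n + 1)) κ)
    (hqC : q ∈ Cyd (Fin.last n) I)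
    (hq : NoVar (Fin.last n) q) (hr : NoVar (Fin.last n) r)
    (hqrI : X (Fin.last n) * q + r ∈ I)
    (huC : u ∈ Cyd (Fin.last n) I)
    (hu : NoVar (Fin.last n) u) (hs : NoVar (Fin.last n) s)
    (husI : X (Fin.last n) * u + s ∈ I) :
    u * r - s * q ∈ Nyd (Fin.last n) I ∧
    (X (Fin.last n) * u + s) * q - u * (X (Fin.last n) * q + r) ∈ Nyd (Fin.last n) I := by
  have h1 : u * r - s * q ∈ Nyd (Fin.last n) I := by
    apply Ideal.subset_span
    constructor
    · have : u * r - s * q =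
          u * (X (Fin.last n) * q + r) - q * (X (Fin.last n) * u + s) := by ring
      rw [this]
      exact I.sub_mem (I.mul_mem_left u hqrI) (I.mul_mem_left q husI)
    · exact NoVar.sub (NoVar.mul hu hr) (NoVar.mul hs hq)
  refine ⟨h1, ?_⟩
  have : (X (Fin.last n) * u + s) * q - u * (X (Fin.last n) * q + r) =
      -(u * r - s * q) := by ring
  rw [this]
  exact (Nyd (Fin.last n) I).neg_mem h1
end

section
/- Let g ∈ S have no term divisible by x_n and let C be an ideal of S generated by polynomials in which the variable x_n does not appear. If Tr((x_n·g)^{p−1}•) compatibly splits C, then Tr(g^{p−1}·c) ∈ C for every c ∈ C. -/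
open MvPolynomial

section Aux

open MvPolynomial Finsupp

variable {κ : Type*} [CommSemiring κ] {σ : Type*} [Fintype σ] [DecidableEq σ] {p : ℕ}

lemma tr_coeff (hp : p ≠ 0) (f : MvPolynomial σ κ) (a : σ →₀ ℕ) :
    coeff a (Tr κ p f) =
      coeff (Finsupp.equivFunOnFinite.symm fun i => p * a i + (p - 1)) f := by
  set t : σ →₀ ℕ := Finsupp.equivFunOnFinite.symm fun i => p * a i + (p - 1) with ht
  have htapp : ∀ i, t i = p * a i + (p - 1) := fun i => rfl
  unfold Tr
  rw [coeff_sum]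
  rw [Finset.sum_eq_single t]
  · by_cases hmem : t ∈ f.support
    · have hcond : ∀ i : σ, (t i + 1) % p = 0 := by
        intro i
        rw [htapp i]
        have : p * a i + (p - 1) + 1 = p * (a i + 1) := by
          have := Nat.mul_add p (a i) 1
          omega
        rw [this, Nat.mul_mod_right]
      rw [if_pos hcond]
      have hψ : (Finsupp.equivFunOnFinite.symm fun i => (t i + 1) / p - 1) = a := by
        ext i
        have h1 : (Finsupp.equivFunOnFinite.symm fun i => (t i + 1) / p - 1) i
            = (t i + 1) / p - 1 := rfl
        rw [h1, htapp i]
        have : p * a i + (p - 1) + 1 = p * (a i + 1) := by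
          have := Nat.mul_add p (a i) 1
          omega
        rw [this, Nat.mul_div_cancel_left _ (Nat.pos_of_ne_zero hp)]
        omega
      rw [hψ, coeff_monomial, if_pos rfl]
    · simp [MvPolynomial.notMem_support_iff.mp hmem]
  · intro b hb hbne
    split_ifs with hcond
    · rw [coeff_monomial]
      rw [if_neg]
      intro heq
      apply hbne
      ext i
      rw [htapp i]
      have hdvd : p ∣ b i + 1 := Nat.dvd_of_mod_eq_zero (hcond i)
      obtain ⟨d, hd⟩ := hdvd
      have hai : (Finsupp.equivFunOnFinite.symm fun i => (b i + 1) / p - 1) i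
          = (b i + 1) / p - 1 := rfl
      have hd1 : 1 ≤ d := by
        rcases Nat.eq_zero_or_pos d with h | h
        · subst h; rw [Nat.mul_zero] at hd; omega
        · exact h
      have hbi : (b i + 1) / p = d := by
        rw [hd, Nat.mul_div_cancel_left _ (Nat.pos_of_ne_zero hp)]
      have hda : d - 1 = a i := by rw [← heq, hai, hbi]
      have : d = a i + 1 := by omega
      subst this
      have := Nat.mul_add p (a i) 1
      omega
    · exact coeff_zero a
  · intro hmem
    simp [MvPolynomial.notMem_support_iff.mp hmem]

lemma tr_zero : Tr κ p (0 : MvPolynomial σ κ) = 0 := by simp [Tr]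

lemma tr_add (hp : p ≠ 0) (f g : MvPolynomial σ κ) :
    Tr κ p (f + g) = Tr κ p f + Tr κ p g := by
  ext a
  simp [tr_coeff hp, coeff_add]

lemma tr_sum (hp : p ≠ 0) {ι : Type*} (s : Finset ι) (F : ι → MvPolynomial σ κ) :
    Tr κ p (∑ i ∈ s, F i) = ∑ i ∈ s, Tr κ p (F i) := by
  induction s using Finset.cons_induction with
  | empty => simpa using tr_zero
  | cons a s ha ih => rw [Finset.sum_cons, tr_add hp, ih, Finset.sum_cons]

lemma tr_eq_zero {f : MvPolynomial σ κ}
    (h : ∀ b ∈ f.support, ∃ i : σ, (b i + 1) % p ≠ 0) : Tr κ p f = 0 := by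
  unfold Tr
  apply Finset.sum_eq_zero
  intro b hb
  obtain ⟨i, hi⟩ := h b hb
  exact if_neg (fun hc => hi (hc i))

lemma noVar_mul {y : σ} {u v : MvPolynomial σ κ} (hu : NoVar y u) (hv : NoVar y v) :
    NoVar y (u * v) := by
  intro b hb
  have := MvPolynomial.support_mul u v hb
  rw [Finset.mem_add] at this
  obtain ⟨b1, hb1, b2, hb2, rfl⟩ := this
  simp [hu b1 hb1, hv b2 hb2]

lemma noVar_pow {y : σ} {u : MvPolynomial σ κ} (hu : NoVar y u) (k : ℕ) :
    NoVar y (u ^ k) := by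
  induction k with
  | zero =>
    intro b hb
    rw [pow_zero] at hb
    have hb' : b ∈ (MvPolynomial.monomial (0 : σ →₀ ℕ) (1 : κ)).support := by
      rwa [MvPolynomial.monomial_zero', MvPolynomial.C_1]
    have hb0 : b = 0 :=
      Finset.mem_singleton.mp (MvPolynomial.support_monomial_subset hb')
    simp [hb0]
  | succ k ih => rw [pow_succ]; exact noVar_mul ih hu

end Aux

/-- If `g` has no term divisible by `x_n`, `C` is generated by polynomials not
involving `x_n`, and `Tr((x_n·g)^{p−1}•)` compatibly splits `C`, then
`Tr(g^{p−1}·c) ∈ C` for every `c ∈ C`. -/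




theorem trace_link_claim {p : ℕ} [Fact p.Prime] {κ : Type*} [Field κ] [CharP κ p]
    [PerfectRing κ p]
    {n : ℕ} (g : MvPolynomial (Fin (n + 1)) κ)
    (hg : NoVar (Fin.last n) g)
    (C : Ideal (MvPolynomial (Fin (n + 1)) κ))
    (hCgen : ∃ G : Set (MvPolynomial (Fin (n + 1)) κ),
      (∀ h ∈ G, NoVar (Fin.last n) h) ∧ C = Ideal.span G)
    (hC : CompatiblySplits (fun a => Tr κ p ((X (Fin.last n) * g) ^ (p - 1) * a)) C) :
    ∀ c ∈ C, Tr κ p (g ^ (p - 1) * c) ∈ C := by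
  classical
  obtain ⟨G, hG, hCG⟩ := hCgen
  subst hCG
  have hp2 : 2 ≤ p := (Fact.out : p.Prime).two_le
  have hp0 : p ≠ 0 := by omega
  set y : Fin (n + 1) := Fin.last n with hy
  have main : ∀ c ∈ Ideal.span G, ∀ f : MvPolynomial (Fin (n + 1)) κ,
      Tr κ p (g ^ (p - 1) * (f * c)) ∈ Ideal.span G := by
    intro c hc
    induction hc using Submodule.span_induction with
    | mem w hw =>
      intro f
      have hrw : g ^ (p - 1) * (f * w)
          = ∑ b ∈ f.support, g ^ (p - 1) * (monomial b (coeff b f) * w) := by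
        conv_lhs => rw [f.as_sum]
        rw [Finset.sum_mul, Finset.mul_sum]
      rw [hrw, tr_sum hp0]
      apply Ideal.sum_mem
      intro b _
      have hbsplit : ∀ m : κ, (monomial b m : MvPolynomial (Fin (n + 1)) κ)
          = X y ^ (b y) * monomial (b.erase y) m := by
        intro m
        conv_lhs => rw [← Finsupp.single_add_erase y b]
        rw [monomial_single_add]
      by_cases hj : (b y + 1) % p = 0
      · obtain ⟨d, hd⟩ := Nat.dvd_of_mod_eq_zero hj
        obtain ⟨k, hk⟩ : ∃ k, b y = (p - 1) + p * k := by
          rcases d with _ | k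
          · omega
          · refine ⟨k, ?_⟩
            rw [Nat.mul_succ] at hd
            omega
        have hid : g ^ (p - 1) * (monomial b (coeff b f) * w)
            = (X y * g) ^ (p - 1)
              * (X y ^ (p * k) * (monomial (b.erase y) (coeff b f) * w)) := by
          rw [hbsplit (coeff b f), hk, pow_add, mul_pow]
          ring
        rw [hid]
        exact hC _ (Ideal.mul_mem_left _ _ (Ideal.mul_mem_left _ _ (Ideal.subset_span hw)))
      · have hnv : NoVar y (g ^ (p - 1) * (monomial (b.erase y) (coeff b f) * w)) := by
          refine noVar_mul (noVar_pow hg _) (noVar_mul ?_ (hG w hw))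
          intro b' hb'
          have hb'' : b' = b.erase y :=
            Finset.mem_singleton.mp (MvPolynomial.support_monomial_subset hb')
          rw [hb'']
          exact Finsupp.erase_same
        have hfac : g ^ (p - 1) * (monomial b (coeff b f) * w)
            = X y ^ (b y) * (g ^ (p - 1) * (monomial (b.erase y) (coeff b f) * w)) := by
          rw [hbsplit (coeff b f)]; ring
        rw [hfac]
        have h0 : Tr κ p (X y ^ (b y)
            * (g ^ (p - 1) * (monomial (b.erase y) (coeff b f) * w))) = 0 := by
          apply tr_eq_zero
          intro b'' hb''
          have hsub := MvPolynomial.support_mul _ _ hb''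
          rw [Finset.mem_add] at hsub
          obtain ⟨c1, hc1, c2, hc2, rfl⟩ := hsub
          have hc1' : c1 = Finsupp.single y (b y) := by
            rw [X_pow_eq_monomial] at hc1
            exact Finset.mem_singleton.mp (MvPolynomial.support_monomial_subset hc1)
          refine ⟨y, ?_⟩
          have : (c1 + c2) y = b y := by
            rw [Finsupp.add_apply, hc1', Finsupp.single_eq_same, hnv c2 hc2]
            omega
          rw [this]
          exact hj
        rw [h0]
        exact Ideal.zero_mem _
    | zero =>
      intro f
      rw [mul_zero, mul_zero, tr_zero]
      exact Ideal.zero_mem _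
    | add a b ha hb iha ihb =>
      intro f
      have h : g ^ (p - 1) * (f * (a + b))
          = g ^ (p - 1) * (f * a) + g ^ (p - 1) * (f * b) := by ring
      rw [h, tr_add hp0]
      exact Ideal.add_mem _ (iha f) (ihb f)
    | smul r a ha ih =>
      intro f
      have h : g ^ (p - 1) * (f * (r • a)) = g ^ (p - 1) * ((f * r) * a) := by
        rw [smul_eq_mul]; ring
      rw [h]
      exact ih (f * r)
  intro c hc
  have := main c hc 1
  rwa [one_mul] at this
end

section
/- Let g, u, s ∈ S each have no term divisible by x_n and let N be an ideal of S generated by polynomials in which the variable x_n does not appear. If Tr((x_n·g)^{p−1}•) compatibly splits N, then Tr(g^{p−1}·(x_n·u + s)^{p−1}·m) ∈ N for every m ∈ N. -/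
open MvPolynomial

section TraceAux

variable {κ : Type*} [CommSemiring κ] {σ : Type*} [Fintype σ] [DecidableEq σ] {p : ℕ}

/-- The exponent map underlying `Tr`: `d ↦ p·d + (p-1)`. -/
noncomputable def trB (p : ℕ) (d : σ →₀ ℕ) : σ →₀ ℕ :=
  Finsupp.equivFunOnFinite.symm fun i => p * d i + (p - 1)

lemma trB_apply (d : σ →₀ ℕ) (i : σ) : trB p d i = p * d i + (p - 1) := rfl

lemma coeff_Tr (hp : 1 < p) (f : MvPolynomial σ κ) (d : σ →₀ ℕ) :
    coeff d (Tr κ p f) = coeff (trB p d) f := by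
  have hp0 : 0 < p := by omega
  unfold Tr
  rw [coeff_sum]
  have hterm : ∀ b : σ →₀ ℕ,
      coeff d (if ∀ i : σ, (b i + 1) % p = 0 then
        MvPolynomial.monomial (Finsupp.equivFunOnFinite.symm fun i => (b i + 1) / p - 1)
          (f.coeff b)
      else 0) = if b = trB p d then coeff b f else 0 := by
    intro b
    by_cases hb : b = trB p d
    · subst hb
      have hcond : ∀ i : σ, (trB p d i + 1) % p = 0 := by
        intro i
        have h1 : trB p d i + 1 = p * (d i + 1) := by
          rw [trB_apply, Nat.mul_add, Nat.mul_one]; omega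
        simp [h1]
      rw [if_pos hcond, if_pos rfl, coeff_monomial, if_pos]
      ext i
      show (trB p d i + 1) / p - 1 = d i
      have h1 : trB p d i + 1 = p * (d i + 1) := by
        rw [trB_apply, Nat.mul_add, Nat.mul_one]; omega
      rw [h1, Nat.mul_div_cancel_left _ hp0]
      omega
    · rw [if_neg hb]
      split_ifs with hc
      · rw [coeff_monomial, if_neg]
        intro hEd
        apply hb
        ext i
        have h2 : (b i + 1) / p - 1 = d i := DFunLike.congr_fun hEd i
        have h3 := hc i
        obtain ⟨t, ht⟩ := Nat.dvd_of_mod_eq_zero h3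
        have ht0 : t ≠ 0 := by rintro rfl; omega
        have hdiv : (b i + 1) / p = t := by rw [ht, Nat.mul_div_cancel_left _ hp0]
        rw [trB_apply]
        have h4 : t = d i + 1 := by omega
        rw [h4] at ht
        have h5 : p * (d i + 1) = p * d i + p := by rw [Nat.mul_add, Nat.mul_one]
        omega
      · exact coeff_zero d
  simp_rw [hterm]
  rw [Finset.sum_ite_eq' f.support (trB p d) (fun b => coeff b f)]
  split_ifs with h
  · rfl
  · exact (notMem_support_iff.mp h).symm

lemma Tr_zero (hp : 1 < p) : Tr κ p (0 : MvPolynomial σ κ) = 0 := by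
  ext d; simp [coeff_Tr hp]

lemma Tr_add (hp : 1 < p) (a b : MvPolynomial σ κ) :
    Tr κ p (a + b) = Tr κ p a + Tr κ p b := by
  ext d; simp [coeff_Tr hp, coeff_add]

lemma Tr_sum (hp : 1 < p) {ι : Type*} (t : Finset ι) (F : ι → MvPolynomial σ κ) :
    Tr κ p (∑ i ∈ t, F i) = ∑ i ∈ t, Tr κ p (F i) := by
  ext d; simp [coeff_Tr hp, coeff_sum]

lemma Tr_X_pow_mul (hp : 1 < p) (y : σ) (q : ℕ) (a : MvPolynomial σ κ) :
    Tr κ p (X y ^ (p * q) * a) = X y ^ q * Tr κ p a := by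
  have hp0 : 0 < p := by omega
  ext d
  rw [coeff_Tr hp, X_pow_eq_monomial, X_pow_eq_monomial, coeff_monomial_mul',
    coeff_monomial_mul']
  by_cases hq : q ≤ d y
  · have h1 : Finsupp.single y (p * q) ≤ trB p d := by
      rw [Finsupp.single_le_iff, trB_apply]
      have := Nat.mul_le_mul_left p hq
      omega
    rw [if_pos h1, if_pos (Finsupp.single_le_iff.mpr hq), one_mul, one_mul, coeff_Tr hp]
    congr 1
    ext i
    rcases eq_or_ne i y with rfl | hi
    · have e1 : p * d i = p * (d i - q) + p * q := by
        rw [← Nat.mul_add, Nat.sub_add_cancel hq]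
      simp only [Finsupp.tsub_apply, trB_apply, Finsupp.single_eq_same]
      omega
    · simp only [Finsupp.tsub_apply, trB_apply, Finsupp.single_eq_of_ne' (Ne.symm hi),
        Nat.sub_zero]
  · have h1 : ¬ Finsupp.single y (p * q) ≤ trB p d := by
      rw [Finsupp.single_le_iff, trB_apply]
      intro hle
      have h2 : p * (d y + 1) ≤ p * q := Nat.mul_le_mul_left p (by omega)
      rw [Nat.mul_add, Nat.mul_one] at h2
      omega
    rw [if_neg h1, if_neg (fun h => hq (Finsupp.single_le_iff.mp h))]

lemma coeff_eq_zero_of_noVar {y : σ} {w : MvPolynomial σ κ} (hw : NoVar y w)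
    {c : σ →₀ ℕ} (hc : c y ≠ 0) : coeff c w = 0 := by
  by_contra h
  exact hc (hw c (mem_support_iff.mpr h))

lemma Tr_X_pow_mul_eq_zero (hp : 1 < p) {y : σ} {j : ℕ} (hj : (j + 1) % p ≠ 0)
    {w : MvPolynomial σ κ} (hw : NoVar y w) : Tr κ p (X y ^ j * w) = 0 := by
  ext d
  rw [coeff_Tr hp, X_pow_eq_monomial, coeff_monomial_mul', coeff_zero]
  split_ifs with h
  · rw [one_mul]
    apply coeff_eq_zero_of_noVar hw
    have hle : j ≤ trB p d y := Finsupp.single_le_iff.mp h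
    have hne : trB p d y ≠ j := by
      intro he
      apply hj
      rw [← he, trB_apply]
      have h1 : p * d y + (p - 1) + 1 = p * (d y + 1) := by
        rw [Nat.mul_add, Nat.mul_one]; omega
      simp [h1]
    rw [Finsupp.tsub_apply, Finsupp.single_eq_same]
    omega
  · rfl

lemma NoVar.mul_s9 {y : σ} {a b : MvPolynomial σ κ} (ha : NoVar y a) (hb : NoVar y b) :
    NoVar y (a * b) := by
  intro c hc
  obtain ⟨c1, hc1, c2, hc2, rfl⟩ := Finset.mem_add.mp (MvPolynomial.support_mul a b hc)
  rw [Finsupp.add_apply, ha c1 hc1, hb c2 hc2]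

lemma noVar_monomial {y : σ} {b : σ →₀ ℕ} (hb : b y = 0) (e : κ) :
    NoVar y (MvPolynomial.monomial b e) := by
  intro c hc
  have h1 := MvPolynomial.support_monomial_subset hc
  rw [Finset.mem_singleton] at h1
  subst h1
  exact hb

lemma NoVar.pow {y : σ} {a : MvPolynomial σ κ} (ha : NoVar y a) (m : ℕ) :
    NoVar y (a ^ m) := by
  induction m with
  | zero => rw [pow_zero, ← MvPolynomial.C_1, MvPolynomial.C_apply]
            exact noVar_monomial rfl 1
  | succ k ih => rw [pow_succ]; exact ih.mul_s9 ha

lemma noVar_natCast (y : σ) (m : ℕ) : NoVar y ((m : ℕ) : MvPolynomial σ κ) := by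
  rw [← map_natCast (MvPolynomial.C : κ →+* MvPolynomial σ κ) m, MvPolynomial.C_apply]
  exact noVar_monomial rfl _

lemma key_term (hp : 1 < p) (y : σ) (g u s : MvPolynomial σ κ)
    (hg : NoVar y g) (hu : NoVar y u) (hs : NoVar y s)
    (G : Set (MvPolynomial σ κ))
    (hN : ∀ a ∈ Ideal.span G, Tr κ p ((X y * g) ^ (p - 1) * a) ∈ Ideal.span G)
    (f : MvPolynomial σ κ) (hf : f ∈ Ideal.span G) (hffree : NoVar y f)
    (b : σ →₀ ℕ) (e : κ) :
    Tr κ p (g ^ (p - 1) * (X y * u + s) ^ (p - 1) * (MvPolynomial.monomial b e * f)) ∈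
      Ideal.span G := by
  have hsplit : (MvPolynomial.monomial b e : MvPolynomial σ κ) =
      X y ^ (b y) * MvPolynomial.monomial (b.erase y) e := by
    rw [X_pow_eq_monomial, monomial_mul, one_mul, Finsupp.single_add_erase]
  have expand : g ^ (p - 1) * (X y * u + s) ^ (p - 1) * (MvPolynomial.monomial b e * f) =
      ∑ i ∈ Finset.range (p - 1 + 1), X y ^ (b y + i) *
        (((p - 1).choose i : MvPolynomial σ κ) * g ^ (p - 1) * u ^ i * s ^ (p - 1 - i) *
          MvPolynomial.monomial (b.erase y) e * f) := by
    rw [hsplit, add_pow, Finset.mul_sum, Finset.sum_mul]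
    refine Finset.sum_congr rfl fun i _ => ?_
    rw [mul_pow, pow_add]
    ring
  rw [expand, Tr_sum hp]
  refine Ideal.sum_mem _ fun i _ => ?_
  set W := ((p - 1).choose i : MvPolynomial σ κ) * g ^ (p - 1) * u ^ i * s ^ (p - 1 - i) *
    MvPolynomial.monomial (b.erase y) e * f with hW
  by_cases hmod : (b y + i + 1) % p = 0
  · obtain ⟨t, ht⟩ := Nat.dvd_of_mod_eq_zero hmod
    have ht0 : t ≠ 0 := by rintro rfl; omega
    have hki : b y + i = p * (t - 1) + (p - 1) := by
      have h2 : p * (t - 1) + p = p * t := by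
        calc p * (t - 1) + p = p * (t - 1 + 1) := by rw [Nat.mul_add, Nat.mul_one]
          _ = p * t := by rw [Nat.sub_add_cancel (by omega)]
      omega
    rw [hki, pow_add, mul_assoc, Tr_X_pow_mul hp]
    refine Ideal.mul_mem_left _ _ ?_
    have hre : X y ^ (p - 1) * W = (X y * g) ^ (p - 1) *
        (((p - 1).choose i : MvPolynomial σ κ) * u ^ i * s ^ (p - 1 - i) *
          MvPolynomial.monomial (b.erase y) e * f) := by
      rw [mul_pow]; ring
    rw [hre]
    exact hN _ (Ideal.mul_mem_left _ _ hf)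
  · have hWfree : NoVar y W := by
      refine ((((noVar_natCast y _).mul_s9 (hg.pow _)).mul_s9 (hu.pow _)).mul_s9 (hs.pow _)).mul_s9
        ?_ |>.mul hffree
      exact noVar_monomial (Finsupp.erase_same) e
    rw [Tr_X_pow_mul_eq_zero hp hmod hWfree]
    exact Ideal.zero_mem _

end TraceAux

/-- If `g`, `u`, `s` have no term divisible by `x_n`, `N` is generated by polynomials not
involving `x_n`, and `Tr((x_n·g)^{p−1}•)` compatibly splits `N`, then
`Tr(g^{p−1}·(x_n·u + s)^{p−1}·m) ∈ N` for every `m ∈ N`. -/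
theorem trace_deletion_claim {p : ℕ} [Fact p.Prime] {κ : Type*} [Field κ] [CharP κ p]
    [PerfectRing κ p]
    {n : ℕ} (g u s : MvPolynomial (Fin (n + 1)) κ)
    (hg : NoVar (Fin.last n) g) (hu : NoVar (Fin.last n) u) (hs : NoVar (Fin.last n) s)
    (N : Ideal (MvPolynomial (Fin (n + 1)) κ))
    (hNgen : ∃ G : Set (MvPolynomial (Fin (n + 1)) κ),
      (∀ h ∈ G, NoVar (Fin.last n) h) ∧ N = Ideal.span G)
    (hN : CompatiblySplits (fun a => Tr κ p ((X (Fin.last n) * g) ^ (p - 1) * a)) N) :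
    ∀ m ∈ N,
      Tr κ p (g ^ (p - 1) * (X (Fin.last n) * u + s) ^ (p - 1) * m) ∈ N := by
  obtain ⟨G, hGfree, rfl⟩ := hNgen
  have hp : 1 < p := (Fact.out : p.Prime).one_lt
  intro m hm
  have key : ∀ c : MvPolynomial (Fin (n + 1)) κ,
      Tr κ p (g ^ (p - 1) * (X (Fin.last n) * u + s) ^ (p - 1) * (c * m)) ∈ Ideal.span G := by
    refine Submodule.span_induction
      (p := fun x _ => ∀ c : MvPolynomial (Fin (n + 1)) κ,
        Tr κ p (g ^ (p - 1) * (X (Fin.last n) * u + s) ^ (p - 1) * (c * x)) ∈ Ideal.span G)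
      ?_ ?_ ?_ ?_ hm
    · intro x hx c
      have hce : c * x = ∑ b ∈ c.support, MvPolynomial.monomial b (coeff b c) * x := by
        rw [← Finset.sum_mul, support_sum_monomial_coeff]
      rw [hce, Finset.mul_sum, Tr_sum hp]
      refine Ideal.sum_mem _ fun b _ => ?_
      exact key_term hp (Fin.last n) g u s hg hu hs G (fun a ha => hN a ha) x
        (Ideal.subset_span hx) (hGfree x hx) b _
    · intro c
      rw [mul_zero, mul_zero, Tr_zero hp]
      exact Ideal.zero_mem _
    · intro x y hx hy ihx ihy c
      rw [mul_add, mul_add, Tr_add hp]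
      exact Ideal.add_mem _ (ihx c) (ihy c)
    · intro r x hx ih c
      have h1 : c * (r • x) = (c * r) * x := by rw [smul_eq_mul]; ring
      rw [h1]
      exact ih (c * r)
  simpa using key 1
end

section
/- Let κ be a perfect field of prime characteristic p, let S = κ[x, y, z, r, s], and let I = (ry, rz, z(yx − s²)). Then the ring S/I is not F-split: there is no additive map φ : S/I → S/I satisfying φ(a^p·b) = a·φ(b) for all a, b ∈ S/I and φ(1) = 1. -/
open MvPolynomial

namespace FSaux

lemma mem_span_triple {R : Type*} [CommRing R] {a b c x : R}
    (h : x ∈ Ideal.span ({a, b, c} : Set R)) :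
    ∃ A B C, x = A * a + B * b + C * c := by
  rw [show ({a, b, c} : Set R) = insert a (insert b {c}) from rfl,
    Ideal.mem_span_insert] at h
  obtain ⟨A, z, hz, rfl⟩ := h
  rw [Ideal.mem_span_insert] at hz
  obtain ⟨B, w, hw, rfl⟩ := hz
  rw [Ideal.mem_span_singleton'] at hw
  obtain ⟨C, hC⟩ := hw
  exact ⟨A, B, C, by rw [← hC]; ring⟩

/-- The substitution sending the variable `j` to `0` and fixing the others. -/
noncomputable def kill {κ : Type*} [CommSemiring κ] (j : Fin 5) :
    MvPolynomial (Fin 5) κ →ₐ[κ] MvPolynomial (Fin 5) κ :=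
  MvPolynomial.aeval (fun i => if i = j then 0 else MvPolynomial.X i)

@[simp] lemma kill_X {κ : Type*} [CommSemiring κ] (j i : Fin 5) :
    kill (κ := κ) j (MvPolynomial.X i) = if i = j then 0 else MvPolynomial.X i := by
  simp [kill]

end FSaux

/-- With `S = κ[x,y,z,r,s]` (variables `X 0, X 1, X 2, X 3, X 4` respectively) and
`I = (ry, rz, z(yx − s²))`, the ring `S/I` is not F-split. -/
theorem fedder_singh_not_Fsplit {p : ℕ} [Fact p.Prime] {κ : Type*} [Field κ] [CharP κ p]
    [PerfectRing κ p] :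
    ¬ ∃ φ : (MvPolynomial (Fin 5) κ ⧸
          (Ideal.span {X 3 * X 1, X 3 * X 2, X 2 * (X 1 * X 0 - X 4 ^ 2)} :
            Ideal (MvPolynomial (Fin 5) κ))) →
        (MvPolynomial (Fin 5) κ ⧸
          (Ideal.span {X 3 * X 1, X 3 * X 2, X 2 * (X 1 * X 0 - X 4 ^ 2)} :
            Ideal (MvPolynomial (Fin 5) κ))),
      (∀ a b, φ (a + b) = φ a + φ b) ∧ (∀ a b, φ (a ^ p * b) = a * φ b) ∧ φ 1 = 1 := by
  rintro ⟨φ, hadd, hmul, hone⟩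
  have hp2 : 2 ≤ p := (Fact.out : p.Prime).two_le
  obtain ⟨q, hq⟩ : ∃ q, p = q + 2 := ⟨p - 2, by omega⟩
  set π := Ideal.Quotient.mk
    (Ideal.span {X 3 * X 1, X 3 * X 2, X 2 * (X 1 * X 0 - X 4 ^ 2)} :
      Ideal (MvPolynomial (Fin 5) κ)) with hπ
  have hzero : φ 0 = 0 := by
    have h := hadd 0 0
    rw [add_zero] at h
    exact (left_eq_add.mp h)
  have hf1 : (X 3 * X 1 : MvPolynomial (Fin 5) κ)
      ∈ Ideal.span {X 3 * X 1, X 3 * X 2, X 2 * (X 1 * X 0 - X 4 ^ 2)} :=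
    Ideal.subset_span (by simp)
  have hf3 : (X 2 * (X 1 * X 0 - X 4 ^ 2) : MvPolynomial (Fin 5) κ)
      ∈ Ideal.span {X 3 * X 1, X 3 * X 2, X 2 * (X 1 * X 0 - X 4 ^ 2)} :=
    Ideal.subset_span (by simp)
  set t := π (X 0 * X 1 * X 4 ^ q) with ht
  set c := φ t with hc
  -- Fact (i): r·c = 0
  have h1 : π (X 3) * c = 0 := by
    have e0 : (X 3 : MvPolynomial (Fin 5) κ) ^ p * (X 0 * X 1 * X 4 ^ q)
        ∈ Ideal.span {X 3 * X 1, X 3 * X 2, X 2 * (X 1 * X 0 - X 4 ^ 2)} := by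
      have e : (X 3 : MvPolynomial (Fin 5) κ) ^ p * (X 0 * X 1 * X 4 ^ q)
          = (X 3 * X 1) * (X 3 ^ (q + 1) * X 0 * X 4 ^ q) := by
        rw [hq]; ring
      rw [e]
      exact Ideal.mul_mem_right _ _ hf1
    have e : (π (X 3)) ^ p * t = 0 := by
      rw [ht, ← map_pow, ← map_mul]
      exact Ideal.Quotient.eq_zero_iff_mem.mpr e0
    calc π (X 3) * c = φ ((π (X 3)) ^ p * t) := (hmul _ _).symm
      _ = φ 0 := by rw [e]
      _ = 0 := hzero
  -- Fact (ii): z·c = z·s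
  have h2 : π (X 2) * c = π (X 2 * X 4) := by
    have e0 : (X 2 : MvPolynomial (Fin 5) κ) ^ p * (X 0 * X 1 * X 4 ^ q)
        - (X 2 * X 4) ^ p
        ∈ Ideal.span {X 3 * X 1, X 3 * X 2, X 2 * (X 1 * X 0 - X 4 ^ 2)} := by
      have e : (X 2 : MvPolynomial (Fin 5) κ) ^ p * (X 0 * X 1 * X 4 ^ q) - (X 2 * X 4) ^ p
          = (X 2 * (X 1 * X 0 - X 4 ^ 2)) * (X 2 ^ (q + 1) * X 4 ^ q) := by
        rw [hq]; ring
      rw [e]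
      exact Ideal.mul_mem_right _ _ hf3
    have e : (π (X 2)) ^ p * t = (π (X 2 * X 4)) ^ p * 1 := by
      rw [mul_one, ht, ← map_pow, ← map_pow, ← map_mul]
      exact Ideal.Quotient.eq.mpr e0
    calc π (X 2) * c = φ ((π (X 2)) ^ p * t) := (hmul _ _).symm
      _ = φ ((π (X 2 * X 4)) ^ p * 1) := by rw [e]
      _ = π (X 2 * X 4) * φ 1 := hmul _ _
      _ = π (X 2 * X 4) := by rw [hone, mul_one]
  -- lift c to the polynomial ring
  obtain ⟨ct, hct⟩ := Ideal.Quotient.mk_surjective c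
  rw [← hπ] at hct
  have m1 : (X 3 : MvPolynomial (Fin 5) κ) * ct
      ∈ Ideal.span {X 3 * X 1, X 3 * X 2, X 2 * (X 1 * X 0 - X 4 ^ 2)} := by
    apply Ideal.Quotient.eq_zero_iff_mem.mp
    show π (X 3 * ct) = 0
    rw [map_mul, hct]
    exact h1
  have m2 : (X 2 : MvPolynomial (Fin 5) κ) * ct - X 2 * X 4
      ∈ Ideal.span {X 3 * X 1, X 3 * X 2, X 2 * (X 1 * X 0 - X 4 ^ 2)} := by
    apply Ideal.Quotient.eq.mp
    show π (X 2 * ct) = π (X 2 * X 4)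
    rw [map_mul, hct]
    exact h2
  obtain ⟨A, B, C, hABC⟩ := FSaux.mem_span_triple m2
  obtain ⟨A', B', C', hABC'⟩ := FSaux.mem_span_triple m1
  -- kill the variable y
  have E1 := congrArg (FSaux.kill (κ := κ) 1) hABC
  have E2 := congrArg (FSaux.kill (κ := κ) 1) hABC'
  simp only [map_add, map_sub, map_mul, map_pow, FSaux.kill_X,
    show ((0 : Fin 5) = 1) = False by simp, show ((1 : Fin 5) = 1) = True by simp,
    show ((2 : Fin 5) = 1) = False by simp,
    show ((3 : Fin 5) = 1) = False by simp, show ((4 : Fin 5) = 1) = False by simp,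
    if_false, if_true] at E1 E2
  -- cancel z in E1
  have E1' : FSaux.kill (κ := κ) 1 ct
      = X 4 + FSaux.kill (κ := κ) 1 B * X 3 - FSaux.kill (κ := κ) 1 C * X 4 ^ 2 := by
    have hz : (X 2 : MvPolynomial (Fin 5) κ) ≠ 0 := MvPolynomial.X_ne_zero 2
    apply mul_left_cancel₀ hz
    linear_combination E1
  -- kill the variable z
  have E3 := congrArg (FSaux.kill (κ := κ) 2) E2
  have E4 := congrArg (FSaux.kill (κ := κ) 2) E1'
  simp only [map_add, map_sub, map_mul, map_pow, map_zero, FSaux.kill_X,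
    show ((0 : Fin 5) = 2) = False by simp, show ((1 : Fin 5) = 2) = False by simp,
    show ((2 : Fin 5) = 2) = True by simp,
    show ((3 : Fin 5) = 2) = False by simp, show ((4 : Fin 5) = 2) = False by simp,
    if_false, if_true] at E3 E4
  -- cancel r
  have hr : (X 3 : MvPolynomial (Fin 5) κ) ≠ 0 := MvPolynomial.X_ne_zero 3
  have E6 : X 4 + (FSaux.kill (κ := κ) 2) ((FSaux.kill (κ := κ) 1) B) * X 3
      - (FSaux.kill (κ := κ) 2) ((FSaux.kill (κ := κ) 1) C) * X 4 ^ 2 = 0 := by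
    apply mul_left_cancel₀ hr
    rw [mul_zero]
    rw [E4] at E3
    linear_combination E3
  -- kill the variable r
  have E7 := congrArg (FSaux.kill (κ := κ) 3) E6
  simp only [map_add, map_sub, map_mul, map_pow, map_zero, FSaux.kill_X,
    show ((3 : Fin 5) = 3) = True by simp,
    show ((4 : Fin 5) = 3) = False by simp, if_false, if_true] at E7
  -- E7 : X 4 + _ * 0 - k C * X 4 ^ 2 = 0; extract the coefficient of s
  have E8 : (X 4 : MvPolynomial (Fin 5) κ)
      = ((FSaux.kill (κ := κ) 3) ((FSaux.kill (κ := κ) 2) ((FSaux.kill (κ := κ) 1) C))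
        * X 4) * X 4 := by linear_combination E7
  have E9 := congrArg (MvPolynomial.coeff (Finsupp.single (4 : Fin 5) 1)) E8
  rw [MvPolynomial.coeff_X, MvPolynomial.coeff_mul_X', if_pos (by simp)] at E9
  simp [MvPolynomial.coeff_mul_X'] at E9
end
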